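/- Let P be a non-commutative Poisson algebra over K whose associative algebra is a right Ore domain with division ring P̃, the bracket extending to P̃. Suppose x ∈ P is strictly semisimple in P, i.e., P = ⊕_{μ ∈ Ev(x,P)} D(x,P,μ) where D(x,P,μ) = {y ∈ P : {x,y} = μy}. If z ∈ P̃ is nonzero and {x,z} = λz for some λ ∈ K, then there exist μ ∈ K, u ∈ D(x,P,λ+μ) and a nonzero w ∈ D(x,P,μ) such that z = u w⁻¹. -/
import Mathlib


/-- A (possibly non-commutative) Poisson algebra structure on an associative
unital `K`-algebra `P`: a `K`-bilinear Lie bracket satisfying the Leibniz rule. -/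
structure PoissonBracket (K P : Type*) [CommRing K] [Ring P] [Algebra K P] where
  bracket : P →ₗ[K] P →ₗ[K] P
  antisymm : ∀ x y : P, bracket x y = - bracket y x
  jacobi : ∀ x y z : P,
    bracket x (bracket y z) = bracket (bracket x y) z + bracket y (bracket x z)
  leibniz : ∀ x y z : P, bracket x (y * z) = bracket x y * z + y * bracket x z

/-- An `f`-invariant submodule containing a nonzero sum of eigenvectors contains a
nonzero eigenvector. -/
lemma exists_eigvec {K P : Type*} [Field K] [AddCommGroup P] [Module K P]
    (f : Module.End K P) (I : Submodule K P) (hI : ∀ y ∈ I, f y ∈ I) :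
    ∀ (s : Finset K) (c : K → P), (∀ μ ∈ s, f (c μ) = μ • c μ) →
      (∑ μ ∈ s, c μ) ∈ I → (∑ μ ∈ s, c μ) ≠ 0 →
      ∃ (μ : K) (w : P), w ≠ 0 ∧ w ∈ I ∧ f w = μ • w := by
  classical
  intro s
  induction s using Finset.strongInduction with
  | _ s ih =>
    intro c hc hbI hb0
    have hs : s.Nonempty := by
      rcases s.eq_empty_or_nonempty with h | h
      · exfalso; apply hb0; simp [h]
      · exact h
    obtain ⟨μ₀, hμ₀⟩ := hs
    set b := ∑ μ ∈ s, c μ with hb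
    by_cases hcase : f b = μ₀ • b
    · exact ⟨μ₀, b, hb0, hbI, hcase⟩
    · have key : f b - μ₀ • b = ∑ μ ∈ s.erase μ₀, (fun μ => (μ - μ₀) • c μ) μ := by
        have h1 : f b = ∑ μ ∈ s, μ • c μ := by
          rw [hb, map_sum]
          exact Finset.sum_congr rfl fun μ hμ => hc μ hμ
        have h2 : μ₀ • b = ∑ μ ∈ s, μ₀ • c μ := by rw [hb, Finset.smul_sum]
        rw [h1, h2, ← Finset.sum_sub_distrib]
        rw [Finset.sum_erase_eq_sub hμ₀]
        simp [sub_smul]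
      apply ih (s.erase μ₀) (Finset.erase_ssubset hμ₀) (fun μ => (μ - μ₀) • c μ)
      · intro μ hμ
        rw [map_smul, hc μ (Finset.mem_of_mem_erase hμ), smul_comm]
      · rw [← key]; exact Submodule.sub_mem I (hI b hbI) (Submodule.smul_mem I μ₀ hbI)
      · rw [← key]; exact sub_ne_zero_of_ne hcase

theorem stmt_9 {K P D : Type*} [Field K] [CharZero K] [IsAlgClosed K]
    [Ring P] [Algebra K P] [NoZeroDivisors P]
    [DivisionRing D] [Algebra K D]
    (B : PoissonBracket K P) (BD : PoissonBracket K D)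
    (ι : P →ₐ[K] D) (hinj : Function.Injective ι)
    (hbr : ∀ a b : P, ι (B.bracket a b) = BD.bracket (ι a) (ι b))
    (hfrac : ∀ x : D, ∃ a b : P, b ≠ 0 ∧ x = ι a * (ι b)⁻¹)
    (x : P)
    (hss : (⨆ μ : K, LinearMap.ker (B.bracket x - μ • (1 : Module.End K P))) = ⊤)
    (z : D) (hz : z ≠ 0) (lam : K) (hev : BD.bracket (ι x) z = lam • z) :
    ∃ (μ : K) (u w : P), B.bracket x u = (lam + μ) • u ∧
      B.bracket x w = μ • w ∧ w ≠ 0 ∧ z = ι u * (ι w)⁻¹ := by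
  have hι0 : ∀ y : P, y ≠ 0 → ι y ≠ 0 := by
    intro y hy h
    exact hy (hinj (by simpa using h))
  -- the submodule I
  let I : Submodule K P :=
    { carrier := {y : P | ∃ u : P, z * ι y = ι u}
      zero_mem' := ⟨0, by simp⟩
      add_mem' := by
        rintro a b ⟨u, hu⟩ ⟨v, hv⟩
        exact ⟨u + v, by rw [map_add, mul_add, hu, hv, map_add]⟩
      smul_mem' := by
        rintro k y ⟨u, hu⟩
        refine ⟨k • u, ?_⟩
        rw [map_smul, map_smul, mul_smul_comm, hu] }
  -- invariance of I under ad x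
  have hInv : ∀ y ∈ I, B.bracket x y ∈ I := by
    rintro y ⟨u, hu⟩
    refine ⟨B.bracket x u - lam • u, ?_⟩
    have hl := BD.leibniz (ι x) z (ι y)
    rw [hu, ← hbr, hev, smul_mul_assoc, hu] at hl
    rw [map_sub, map_smul, hl, add_sub_cancel_left, hbr]
  -- b ∈ I
  obtain ⟨a, b, hb0, hzab⟩ := hfrac z
  have hιb : ι b ≠ 0 := hι0 b hb0
  have hzb : z * ι b = ι a := by
    rw [hzab, mul_assoc, inv_mul_cancel₀ hιb, mul_one]
  have hbI : b ∈ I := ⟨a, hzb⟩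
  -- decompose b into eigenvectors
  have hbtop : b ∈ (⨆ μ : K, LinearMap.ker (B.bracket x - μ • (1 : Module.End K P))) := by
    rw [hss]; trivial
  obtain ⟨c, hc, hcsum⟩ := (Submodule.mem_iSup_iff_exists_finsupp _ _).mp hbtop
  have hcs : b = ∑ μ ∈ c.support, c μ := by
    rw [← hcsum]; rfl
  obtain ⟨μ, w, hw0, hwI, hwev⟩ :=
    exists_eigvec (B.bracket x) I hInv c.support c
      (fun μ _ => by
        have := hc μ
        rw [LinearMap.mem_ker, LinearMap.sub_apply] at this
        have h1 : (μ • (1 : Module.End K P)) (c μ) = μ • c μ := rfl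
        rw [h1] at this
        exact sub_eq_zero.mp this)
      (hcs ▸ hbI) (hcs ▸ hb0)
  obtain ⟨u, hu⟩ := hwI
  have hιw : ι w ≠ 0 := hι0 w hw0
  have hzuw : z = ι u * (ι w)⁻¹ := by
    rw [← hu, mul_assoc, mul_inv_cancel₀ hιw, mul_one]
  -- eigenvalue of u
  have hueq : B.bracket x u = (lam + μ) • u := by
    apply hinj
    have hl := BD.leibniz (ι x) z (ι w)
    rw [hu, ← hbr x u, ← hbr x w, hev, hwev, map_smul, smul_mul_assoc, mul_smul_comm, hu] at hl
    rw [hl, map_smul, add_smul]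
  exact ⟨μ, u, w, hueq, hwev, hw0, hzuw⟩
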